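/- For the normalized integral quantity of interest: for distinct points x₁,…,x_m ∈ [−1,1] and any a ∈ ℝ^m, the dual norm on C[−1,1] of the functional f ↦ (1/2)∫_{−1}^1 f(x)dx − Σᵢ aᵢ f(xᵢ) equals 1 + Σᵢ |aᵢ|. -/

import Mathlib

open scoped BigOperators MeasureTheory

attribute [local instance] MeasureTheory.Measure.Subtype.measureSpace

open MeasureTheory Set

section aux
variable {m : ℕ} (x : Fin m → Set.Icc (-1 : ℝ) 1) (a : Fin m → ℝ) (δ : ℝ)

noncomputable def testF : ℝ → ℝ := fun t =>
  max (-1) (1 - ∑ i, (1 + (if 0 ≤ a i then (1:ℝ) else -1)) * max 0 (1 - |t - (x i : ℝ)| / δ))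

lemma testF_cont : Continuous (testF x a δ) := by
  apply continuous_const.max
  apply continuous_const.sub
  apply continuous_finset_sum
  intro i _
  exact continuous_const.mul (continuous_const.max (by fun_prop))

lemma sum_nonneg' (t : ℝ) :
    0 ≤ ∑ i, (1 + (if 0 ≤ a i then (1:ℝ) else -1)) * max 0 (1 - |t - (x i : ℝ)| / δ) := by
  apply Finset.sum_nonneg
  intro i _
  apply mul_nonneg
  · split <;> norm_num
  · exact le_max_left _ _

lemma testF_le_one (t : ℝ) : |testF x a δ t| ≤ 1 := by
  rw [abs_le]
  refine ⟨le_max_left _ _, max_le (by norm_num) ?_⟩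
  linarith [sum_nonneg' x a δ t]

lemma testF_apply (hδ : 0 < δ) (hsep : ∀ i j : Fin m, i ≠ j → δ ≤ |(x i : ℝ) - (x j : ℝ)|)
    (j : Fin m) : testF x a δ (x j) = - (if 0 ≤ a j then (1:ℝ) else -1) := by
  unfold testF
  have hsum : ∑ i, (1 + (if 0 ≤ a i then (1:ℝ) else -1)) * max 0 (1 - |(x j : ℝ) - (x i : ℝ)| / δ)
      = 1 + (if 0 ≤ a j then (1:ℝ) else -1) := by
    rw [Finset.sum_eq_single j]
    · simp
    · intro i _ hij
      have h1 : δ ≤ |(x j : ℝ) - (x i : ℝ)| := by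
        rw [abs_sub_comm]; exact hsep i j hij
      have h2 : 1 - |(x j : ℝ) - (x i : ℝ)| / δ ≤ 0 := by
        rw [sub_nonpos, le_div_iff₀ hδ, one_mul]; exact h1
      rw [max_eq_left h2, mul_zero]
    · intro h; exact absurd (Finset.mem_univ j) h
  rw [hsum, max_eq_right] <;> split <;> norm_num

lemma testF_lower (hδ : 0 < δ) (t : ℝ) :
    1 - ∑ i, 2 * (Ioo ((x i : ℝ) - δ) ((x i : ℝ) + δ)).indicator (fun _ => (1:ℝ)) t
      ≤ testF x a δ t := by
  refine le_trans ?_ (le_max_right _ _)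
  gcongr 1 - ?_
  apply Finset.sum_le_sum
  intro i _
  by_cases ht : t ∈ Ioo ((x i : ℝ) - δ) ((x i : ℝ) + δ)
  · rw [indicator_of_mem ht]
    have h1 : max 0 (1 - |t - (x i : ℝ)| / δ) ≤ 1 := by
      apply max_le zero_le_one
      have : 0 ≤ |t - (x i : ℝ)| / δ := div_nonneg (abs_nonneg _) hδ.le
      linarith
    have h2 : (1 + (if 0 ≤ a i then (1:ℝ) else -1)) ≤ 2 := by split <;> norm_num
    calc (1 + (if 0 ≤ a i then (1:ℝ) else -1)) * max 0 (1 - |t - (x i : ℝ)| / δ)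
        ≤ 2 * max 0 (1 - |t - (x i : ℝ)| / δ) := by
          apply mul_le_mul_of_nonneg_right h2 (le_max_left _ _)
      _ ≤ 2 * 1 := by linarith
      _ = 2 * 1 := rfl
  · rw [indicator_of_notMem ht, mul_zero]
    have h1 : δ ≤ |t - (x i : ℝ)| := by
      rw [mem_Ioo, not_and_or, not_lt, not_lt] at ht
      rcases ht with h | h
      · rw [abs_sub_comm, abs_of_nonneg (by linarith)]; linarith
      · rw [abs_of_nonneg (by linarith)]; linarith
    have h2 : 1 - |t - (x i : ℝ)| / δ ≤ 0 := by
      rw [sub_nonpos, le_div_iff₀ hδ, one_mul]; exact h1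
    rw [max_eq_left h2, mul_zero]
end aux

section integralbound
variable {m : ℕ} (x : Fin m → Set.Icc (-1 : ℝ) 1) (a : Fin m → ℝ) (δ : ℝ)

lemma indicator_integrable (i : Fin m) :
    Integrable (fun t => (2:ℝ) * (Ioo ((x i : ℝ) - δ) ((x i : ℝ) + δ)).indicator
      (fun _ => (1:ℝ)) t) (volume.restrict (Icc (-1:ℝ) 1)) := by
  haveI : IsFiniteMeasure (volume.restrict (Icc (-1:ℝ) 1)) := by
    constructor
    rw [Measure.restrict_apply_univ, Real.volume_Icc]
    exact ENNReal.ofReal_lt_top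
  exact ((integrable_const (1:ℝ)).indicator measurableSet_Ioo).const_mul 2

lemma indicator_integral_le (hδ : 0 < δ) (i : Fin m) :
    ∫ t in Icc (-1:ℝ) 1, (Ioo ((x i : ℝ) - δ) ((x i : ℝ) + δ)).indicator (fun _ => (1:ℝ)) t
      ≤ 2 * δ := by
  rw [setIntegral_indicator measurableSet_Ioo, setIntegral_const, smul_eq_mul, mul_one]
  have h1 : volume (Icc (-1:ℝ) 1 ∩ Ioo ((x i : ℝ) - δ) ((x i : ℝ) + δ))
      ≤ ENNReal.ofReal (2*δ) := by
    refine le_trans (measure_mono inter_subset_right) ?_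
    rw [Real.volume_Ioo]
    apply ENNReal.ofReal_le_ofReal
    ring_nf
    linarith
  calc (volume (Icc (-1:ℝ) 1 ∩ Ioo ((x i : ℝ) - δ) ((x i : ℝ) + δ))).toReal
      ≤ (ENNReal.ofReal (2*δ)).toReal := ENNReal.toReal_mono ENNReal.ofReal_ne_top h1
    _ = 2*δ := ENNReal.toReal_ofReal (by linarith)

lemma testF_integral_ge (hδ : 0 < δ) :
    2 - 4*m*δ ≤ ∫ t in Icc (-1:ℝ) 1, testF x a δ t := by
  haveI : IsFiniteMeasure (volume.restrict (Icc (-1:ℝ) 1)) := by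
    constructor
    rw [Measure.restrict_apply_univ, Real.volume_Icc]
    exact ENNReal.ofReal_lt_top
  have hG : Integrable (fun t => 1 - ∑ i, 2 * (Ioo ((x i : ℝ) - δ) ((x i : ℝ) + δ)).indicator
      (fun _ => (1:ℝ)) t) (volume.restrict (Icc (-1:ℝ) 1)) :=
    (integrable_const 1).sub (integrable_finset_sum _ fun i _ => indicator_integrable x δ i)
  have hF : Integrable (testF x a δ) (volume.restrict (Icc (-1:ℝ) 1)) :=
    (testF_cont x a δ).integrableOn_Icc
  have hmono := integral_mono hG hF (fun t => testF_lower x a δ hδ t)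
  refine le_trans ?_ hmono
  rw [integral_sub (integrable_const 1) (integrable_finset_sum _ fun i _ =>
    indicator_integrable x δ i), integral_finset_sum _ (fun i _ => indicator_integrable x δ i),
    integral_const, smul_eq_mul, mul_one, measureReal_def, Measure.restrict_apply_univ, Real.volume_Icc]
  have h2 : (ENNReal.ofReal (1 - (-1))).toReal = 2 := by
    rw [ENNReal.toReal_ofReal (by norm_num)]; norm_num
  rw [h2]
  have h3 : ∑ i : Fin m, ∫ t in Icc (-1:ℝ) 1,
      2 * (Ioo ((x i : ℝ) - δ) ((x i : ℝ) + δ)).indicator (fun _ => (1:ℝ)) t ≤ 4*m*δ := by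
    calc ∑ i : Fin m, ∫ t in Icc (-1:ℝ) 1,
        2 * (Ioo ((x i : ℝ) - δ) ((x i : ℝ) + δ)).indicator (fun _ => (1:ℝ)) t
        ≤ ∑ _i : Fin m, 2 * (2*δ) := by
          apply Finset.sum_le_sum
          intro i _
          rw [integral_const_mul]
          have := indicator_integral_le x δ hδ i
          linarith
      _ = 4*m*δ := by simp [Finset.sum_const]; ring
  linarith
end integralbound

lemma exists_delta {m : ℕ} (x : Fin m → Set.Icc (-1 : ℝ) 1) (hx : Function.Injective x)
    (ε : ℝ) (hε : 0 < ε) :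
    ∃ δ : ℝ, 0 < δ ∧ 2*m*δ ≤ ε ∧ ∀ i j : Fin m, i ≠ j → δ ≤ |(x i : ℝ) - (x j : ℝ)| := by
  have hq : (0:ℝ) < 2*m+1 := by positivity
  have hε' : 0 < ε / (2*m+1) := by positivity
  have hεle : 2*(m:ℝ)*(ε/(2*m+1)) ≤ ε := by
    rw [mul_div_assoc', div_le_iff₀ hq]
    nlinarith
  set T := (Finset.univ : Finset (Fin m × Fin m)).filter (fun p => p.1 ≠ p.2) with hT
  rcases T.eq_empty_or_nonempty with h | h
  · refine ⟨ε/(2*m+1), hε', hεle, fun i j hij => ?_⟩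
    exfalso
    have : (i, j) ∈ T := Finset.mem_filter.2 ⟨Finset.mem_univ _, hij⟩
    rw [h] at this
    exact absurd this (Finset.notMem_empty _)
  · set d := T.inf' h (fun p => |(x p.1 : ℝ) - (x p.2 : ℝ)|) with hd
    have hdpos : 0 < d := by
      rw [hd, Finset.lt_inf'_iff]
      intro p hp
      rw [hT, Finset.mem_filter] at hp
      have hne : (x p.1 : ℝ) ≠ (x p.2 : ℝ) :=
        fun hc => hp.2 (hx (Subtype.coe_injective hc))
      exact abs_pos.2 (sub_ne_zero.2 hne)
    refine ⟨min (ε/(2*m+1)) d, lt_min hε' hdpos, ?_, ?_⟩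
    · calc 2*(m:ℝ)*(min (ε/(2*m+1)) d) ≤ 2*(m:ℝ)*(ε/(2*m+1)) := by
            apply mul_le_mul_of_nonneg_left (min_le_left _ _) (by positivity)
        _ ≤ ε := hεle
    · intro i j hij
      refine le_trans (min_le_right _ _) ?_
      exact Finset.inf'_le (fun p : Fin m × Fin m => |(x p.1 : ℝ) - (x p.2 : ℝ)|)
        (Finset.mem_filter.2 ⟨Finset.mem_univ (i, j), hij⟩)

/-- For distinct points `x₁, …, x_m ∈ [−1,1]`, the dual norm on `C[−1,1]` of
`f ↦ (1/2)∫_{−1}^1 f − Σᵢ aᵢ f(xᵢ)` equals `1 + Σᵢ |aᵢ|`. -/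
theorem stmt_9 {m : ℕ} (x : Fin m → Set.Icc (-1 : ℝ) 1)
    (hx : Function.Injective x) (a : Fin m → ℝ) :
    sSup {r : ℝ | ∃ f : C(Set.Icc (-1 : ℝ) 1, ℝ), ‖f‖ ≤ 1 ∧
        r = |(1 / 2) * (∫ t : Set.Icc (-1 : ℝ) 1, f t) - ∑ i, a i * f (x i)|}
      = 1 + ∑ i, |a i| := by
  haveI : IsFiniteMeasure (volume : Measure (Set.Icc (-1:ℝ) 1)) := by
    constructor
    rw [Measure.Subtype.volume_univ nullMeasurableSet_Icc, Real.volume_Icc]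
    exact ENNReal.ofReal_lt_top
  set S := {r : ℝ | ∃ f : C(Set.Icc (-1 : ℝ) 1, ℝ), ‖f‖ ≤ 1 ∧
      r = |(1 / 2) * (∫ t : Set.Icc (-1 : ℝ) 1, f t) - ∑ i, a i * f (x i)|} with hS
  have htgt : (0:ℝ) ≤ 1 + ∑ i, |a i| :=
    add_nonneg zero_le_one (Finset.sum_nonneg fun i _ => abs_nonneg _)
  have hub : ∀ r ∈ S, r ≤ 1 + ∑ i, |a i| := by
    rintro r ⟨f, hf, rfl⟩
    have hInt : |∫ t : Set.Icc (-1:ℝ) 1, f t| ≤ 2 := by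
      have h := norm_integral_le_of_norm_le_const (μ := (volume : Measure (Set.Icc (-1:ℝ) 1)))
        (f := fun t => f t) (C := 1) ?_
      · rw [Real.norm_eq_abs] at h
        calc |∫ t : Set.Icc (-1:ℝ) 1, f t|
            ≤ 1 * (volume (univ : Set (Set.Icc (-1:ℝ) 1))).toReal := h
          _ = 2 := by
              rw [Measure.Subtype.volume_univ nullMeasurableSet_Icc, Real.volume_Icc]
              norm_num [ENNReal.toReal_ofReal]
      · filter_upwards with t
        rw [Real.norm_eq_abs]
        exact le_trans (f.norm_coe_le_norm t) hf
    have hsum : |∑ i, a i * f (x i)| ≤ ∑ i, |a i| := by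
      refine le_trans (Finset.abs_sum_le_sum_abs _ _) (Finset.sum_le_sum fun i _ => ?_)
      rw [abs_mul]
      have : |f (x i)| ≤ 1 := le_trans (f.norm_coe_le_norm (x i)) hf
      nlinarith [abs_nonneg (a i), abs_nonneg (f (x i))]
    calc |(1 / 2) * (∫ t : Set.Icc (-1 : ℝ) 1, f t) - ∑ i, a i * f (x i)|
        ≤ |(1 / 2) * (∫ t : Set.Icc (-1 : ℝ) 1, f t)| + |∑ i, a i * f (x i)| :=
          abs_sub _ _
      _ ≤ 1 + ∑ i, |a i| := by
          rw [abs_mul]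
          have : |(1:ℝ)/2| = 1/2 := by norm_num
          rw [this]
          linarith
  refine le_antisymm (Real.sSup_le hub htgt) ?_
  refine le_of_forall_pos_le_add fun ε hε => ?_
  obtain ⟨δ, hδ, hδε, hsep⟩ := exists_delta x hx ε hε
  set F := testF x a δ with hF
  set f : C(Set.Icc (-1:ℝ) 1, ℝ) :=
    ⟨fun t => F ↑t, (testF_cont x a δ).comp continuous_subtype_val⟩ with hfdef
  have hnorm : ‖f‖ ≤ 1 := by
    rw [ContinuousMap.norm_le _ zero_le_one]
    intro t
    rw [Real.norm_eq_abs]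
    exact testF_le_one x a δ ↑t
  have hval : ∀ j, a j * f (x j) = -|a j| := by
    intro j
    have h := testF_apply x a δ hδ hsep j
    show a j * F ↑(x j) = -|a j|
    rw [hF, h]
    by_cases hj : 0 ≤ a j
    · rw [if_pos hj, abs_of_nonneg hj]; ring
    · rw [if_neg hj, abs_of_neg (lt_of_not_ge hj)]; ring
  have hint : (2:ℝ) - 4*m*δ ≤ ∫ t : Set.Icc (-1:ℝ) 1, f t := by
    have := integral_subtype (s := Icc (-1:ℝ) 1) measurableSet_Icc F
    show (2:ℝ) - 4*m*δ ≤ ∫ t : Set.Icc (-1:ℝ) 1, F ↑t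
    rw [this]
    exact testF_integral_ge x a δ hδ
  set r := |(1 / 2) * (∫ t : Set.Icc (-1 : ℝ) 1, f t) - ∑ i, a i * f (x i)| with hr
  have hmem : r ∈ S := ⟨f, hnorm, rfl⟩
  have hrge : 1 + ∑ i, |a i| - ε ≤ r := by
    have hsum : ∑ i, a i * f (x i) = -∑ i, |a i| := by
      rw [← Finset.sum_neg_distrib]
      exact Finset.sum_congr rfl fun i _ => hval i
    have : (1 / 2) * (∫ t : Set.Icc (-1 : ℝ) 1, f t) - ∑ i, a i * f (x i)
        ≥ 1 - 2*m*δ + ∑ i, |a i| := by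
      rw [hsum]
      have := hint
      linarith
    refine le_trans ?_ (le_abs_self _)
    linarith
  have hle : r ≤ sSup S := le_csSup ⟨1 + ∑ i, |a i|, hub⟩ hmem
  linarith
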